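/- Let N > 2 be a real number, set c* = (N−2)^{(N−2)/2} / N^{(N+2)/2} and a = √((N−2)/N), define F(v) = (v²−1)/N + 2c*·v^{2−N} for v > 0, and let v : ℝ → ℝ be the unique differentiable function with v(t) > a for all t, v(0) = 1, and v′(t) = √(F(v(t))) for all t. Then v is twice differentiable, and setting H(t) = v″(t)/v′(t) + (N−1)·v′(t)/v(t), the limit lim_{t→∞} (√N − H(t))·e^{2t/√N} exists and equals some A ∈ (0,∞). -/

import Mathlib

open Real Filter Set Topology
open MeasureTheory

-- |√A − √B| ≤ |A − B|/√B
private lemma sqrt_diff_le {A B : ℝ} (hA : 0 ≤ A) (hB : 0 < B) :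
    |Real.sqrt A - Real.sqrt B| ≤ |A - B| / Real.sqrt B := by
  have hsB : 0 < Real.sqrt B := Real.sqrt_pos.2 hB
  rw [le_div_iff₀ hsB]
  have h1 : (Real.sqrt A - Real.sqrt B) * (Real.sqrt A + Real.sqrt B) = A - B := by
    have h2 := Real.sq_sqrt hA
    have h3 := Real.sq_sqrt hB.le
    nlinarith
  calc |Real.sqrt A - Real.sqrt B| * Real.sqrt B
      ≤ |Real.sqrt A - Real.sqrt B| * (Real.sqrt A + Real.sqrt B) := by
        apply mul_le_mul_of_nonneg_left _ (abs_nonneg _)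
        nlinarith [Real.sqrt_nonneg A]
    _ = |(Real.sqrt A - Real.sqrt B) * (Real.sqrt A + Real.sqrt B)| := by
        rw [abs_mul, abs_of_nonneg (add_nonneg (Real.sqrt_nonneg A) (Real.sqrt_nonneg B))]
    _ = |A - B| := by rw [h1]

set_option maxHeartbeats 1000000 in
private lemma glim_aux (N cs a : ℝ) (F : ℝ → ℝ) (hN0 : 0 < N) (hN2 : 0 < N-2)
    (hsN : 0 < Real.sqrt N) (ha1 : a < 1) (hcs0 : 0 < cs)
    (hF : ∀ v, F v = (v ^ 2 - 1) / N + 2 * cs * v ^ (2 - N))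
    (hFpos : ∀ x : ℝ, a < x → 0 < F x)
    (hq : Tendsto (fun x => Real.sqrt (F x) / x) atTop (𝓝 (1/Real.sqrt N)))
    (hP0 : Tendsto (fun x : ℝ => x^(2-N)) atTop (𝓝 0)) :
    Tendsto (fun x => (Real.sqrt N -
      ((2*x/N + 2*cs*((2-N)*x^(1-N)))/(2*Real.sqrt (F x)) + (N-1)*Real.sqrt (F x)/x)) * x^2)
      atTop (𝓝 ((N-2)/(2*Real.sqrt N))) := by
  have hss : Real.sqrt N * Real.sqrt N = N := Real.mul_self_sqrt hN0.le
  -- the limit in (w/x)-form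
  have h2ne : Real.sqrt N * (1/Real.sqrt N) + 1 ≠ 0 := by
    rw [mul_one_div, div_self hsN.ne']
    norm_num
  have hlim : Tendsto (fun x => (1/(2*(Real.sqrt (F x)/x))) *
      ((2/(Real.sqrt N*(Real.sqrt (F x)/x)+1))*(2*N*cs*x^(2-N) - 1)
        + 2*(N-1)/N - 2*N*cs*x^(2-N))) atTop
      (𝓝 ((1/(2*(1/Real.sqrt N))) *
        ((2/(Real.sqrt N*(1/Real.sqrt N)+1))*(2*N*cs*0 - 1) + 2*(N-1)/N - 2*N*cs*0))) := by
    apply Tendsto.mul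
    · exact tendsto_const_nhds.div (hq.const_mul 2) (by positivity)
    · apply Tendsto.sub
      · apply Tendsto.add
        · exact (tendsto_const_nhds.div ((hq.const_mul _).add_const 1) h2ne).mul
            ((hP0.const_mul _).sub_const 1)
        · exact tendsto_const_nhds
      · exact hP0.const_mul _
  have hval : (1/(2*(1/Real.sqrt N))) *
      ((2/(Real.sqrt N*(1/Real.sqrt N)+1))*(2*N*cs*0 - 1) + 2*(N-1)/N - 2*N*cs*0)
      = (N-2)/(2*Real.sqrt N) := by
    field_simp
    linear_combination (2*N - 4) * hss
  rw [hval] at hlim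
  apply hlim.congr'
  filter_upwards [eventually_ge_atTop (1:ℝ)] with x hx
  have hx0 : (0:ℝ) < x := lt_of_lt_of_le one_pos hx
  have hFx : 0 < F x := hFpos x (lt_of_lt_of_le ha1 hx)
  have hw : 0 < Real.sqrt (F x) := Real.sqrt_pos.2 hFx
  have hw2 : Real.sqrt (F x)^2 = (x^2 - 1)/N + 2*cs*x^(2-N) := by
    rw [Real.sq_sqrt hFx.le, hF]
  have hP : x^(1-N) = x^(2-N)/x := by
    rw [eq_div_iff hx0.ne', ← Real.rpow_add_one hx0.ne', show (1-N)+1 = 2-N by ring]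
  have hrwx : 0 < Real.sqrt N * Real.sqrt (F x) + x := by positivity
  have hDiff : Real.sqrt N * Real.sqrt (F x) - x
      = (2*N*cs*x^(2-N) - 1)/(Real.sqrt N * Real.sqrt (F x) + x) := by
    rw [eq_div_iff hrwx.ne']
    have h1 : (Real.sqrt N * Real.sqrt (F x) - x)*(Real.sqrt N * Real.sqrt (F x) + x)
        = N*(Real.sqrt (F x))^2 - x^2 := by linear_combination (Real.sqrt (F x)^2)*hss
    rw [h1, hw2]
    field_simp
    ring
  have h3 : 2*x*((2*N*cs*x^(2-N) - 1)/(Real.sqrt N * Real.sqrt (F x) + x))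
      = 2*Real.sqrt N*Real.sqrt (F x)*x - 2*x^2 := by
    rw [← hDiff]; ring
  have hden : Real.sqrt N*(Real.sqrt (F x)/x)+1 = (Real.sqrt N*Real.sqrt (F x)+x)/x := by
    field_simp
  have hstep : (2/(Real.sqrt N*(Real.sqrt (F x)/x)+1))*(2*N*cs*x^(2-N) - 1)
      = 2*Real.sqrt N*Real.sqrt (F x)*x - 2*x^2 := by
    rw [hden, div_div_eq_mul_div, ← h3]
    ring
  have hNw2 : N * Real.sqrt (F x)^2 = x^2 - 1 + 2*N*cs*x^(2-N) := by
    rw [hw2]; field_simp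
  have hmain : (Real.sqrt N -
      ((2*x/N + 2*cs*((2-N)*(x^(2-N)/x)))/(2*Real.sqrt (F x)) + (N-1)*Real.sqrt (F x)/x))
        * (2*Real.sqrt (F x)*x)
      = 2*Real.sqrt N*Real.sqrt (F x)*x - 2*x^2 + 2*(N-1)/N - 2*N*cs*x^(2-N) := by
    field_simp
    linear_combination (-(N-1)) * hNw2
  have hxw : (1:ℝ)/(2*(Real.sqrt (F x)/x)) = x/(2*Real.sqrt (F x)) := by
    rw [show 2*(Real.sqrt (F x)/x) = 2*Real.sqrt (F x)/x by ring, one_div_div]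
  have key : (Real.sqrt N -
      ((2*x/N + 2*cs*((2-N)*x^(1-N)))/(2*Real.sqrt (F x)) + (N-1)*Real.sqrt (F x)/x)) * x^2
      = (1/(2*(Real.sqrt (F x)/x))) *
      ((2/(Real.sqrt N*(Real.sqrt (F x)/x)+1))*(2*N*cs*x^(2-N) - 1)
        + 2*(N-1)/N - 2*N*cs*x^(2-N)) := by
    rw [hP, hstep, hxw, ← hmain]
    field_simp
  exact key.symm

set_option maxHeartbeats 4000000 in
theorem stmt_16 (N : ℝ) (hN : 2 < N)
    (cs a : ℝ) (hcs : cs = (N - 2) ^ ((N - 2) / 2) / N ^ ((N + 2) / 2))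
    (ha : a = Real.sqrt ((N - 2) / N))
    (F : ℝ → ℝ) (hF : ∀ v, F v = (v ^ 2 - 1) / N + 2 * cs * v ^ (2 - N))
    (v : ℝ → ℝ) (hva : ∀ t, a < v t) (hv0 : v 0 = 1)
    (hvd : ∀ t, HasDerivAt v (Real.sqrt (F (v t))) t)
    (H : ℝ → ℝ)
    (hH : ∀ t, H t = deriv (deriv v) t / deriv v t + (N - 1) * deriv v t / v t) :
    (∀ t, DifferentiableAt ℝ (deriv v) t) ∧
    ∃ A : ℝ, 0 < A ∧
      Filter.Tendsto (fun t => (Real.sqrt N - H t) * Real.exp (2 * t / Real.sqrt N))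
        Filter.atTop (𝓝 A) := by
  have hN0 : (0:ℝ) < N := by linarith
  have hN2 : (0:ℝ) < N - 2 := by linarith
  have hsN : 0 < Real.sqrt N := Real.sqrt_pos.2 hN0
  have hd0 : (0:ℝ) < (N-2)/N := by positivity
  have ha0 : 0 < a := by rw [ha]; exact Real.sqrt_pos.2 hd0
  have ha2 : a ^ 2 = (N-2)/N := by rw [ha]; exact Real.sq_sqrt hd0.le
  have ha1 : a < 1 := by
    have h1 : a ^ 2 < 1 := by rw [ha2, div_lt_one hN0]; linarith
    nlinarith [ha0]
  -- key identity for cs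
  have hkey : cs * (N * (N - 2)) = a ^ N := by
    rw [hcs, ha, Real.sqrt_eq_rpow, ← Real.rpow_mul hd0.le, Real.div_rpow hN2.le hN0.le]
    rw [show (1:ℝ)/2 * N = N/2 by ring]
    rw [show (N-2)/2 = N/2 - 1 by ring, show (N+2)/2 = N/2 + 1 by ring]
    rw [Real.rpow_sub hN2, Real.rpow_add hN0, Real.rpow_one, Real.rpow_one]
    field_simp
  have haN : (0:ℝ) < a ^ N := Real.rpow_pos_of_pos ha0 N
  have hcs0 : 0 < cs := by
    have h1 : cs = a ^ N / (N * (N-2)) := by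
      rw [← hkey]; field_simp
    rw [h1]; positivity
  -- derivative of F
  have hF' : ∀ x : ℝ, 0 < x → HasDerivAt F (2*x/N + 2*cs*((2-N)*x^(1-N))) x := by
    intro x hx
    have h1 : HasDerivAt (fun y : ℝ => (y ^ 2 - 1) / N) (2*x/N) x := by
      have := ((hasDerivAt_pow 2 x).sub_const 1).div_const N
      simpa using this.congr_deriv (by ring)
    have h2 : HasDerivAt (fun y : ℝ => y ^ (2-N)) ((2-N)*x^(2-N-1)) x :=
      Real.hasDerivAt_rpow_const (Or.inl hx.ne')
    have h3 := h1.add (h2.const_mul (2*cs))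
    have he : (2:ℝ) - N - 1 = 1 - N := by ring
    rw [he] at h3
    rw [funext hF]
    exact h3
  -- the derivative of F is positive on (a, ∞)
  have hf'pos : ∀ x : ℝ, a < x → 0 < 2*x/N + 2*cs*((2-N)*x^(1-N)) := by
    intro x hax
    have hx : 0 < x := ha0.trans hax
    have hx1N : x ^ (1-N) = x / x ^ N := by
      rw [Real.rpow_sub hx, Real.rpow_one]
    have hcsid : 2*cs*(2-N) = -(2/N)*(a^N) := by
      field_simp
      linear_combination (-1 : ℝ) * hkey
    have haxN : a ^ N < x ^ N := Real.rpow_lt_rpow ha0.le hax hN0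
    have hxN : (0:ℝ) < x ^ N := Real.rpow_pos_of_pos hx N
    have hrw : 2*cs*((2-N)*x^(1-N)) = -(2/N)*(a^N) * (x / x^N) := by
      rw [show 2*cs*((2-N)*x^(1-N)) = (2*cs*(2-N))*x^(1-N) by ring, hcsid, hx1N]
    rw [hrw]
    have hlt : a ^ N * (x / x ^ N) < x := by
      have h1 : a ^ N / x ^ N < 1 := (div_lt_one hxN).2 haxN
      have h2 : a ^ N * (x / x ^ N) = (a ^ N / x ^ N) * x := by ring
      rw [h2]
      nlinarith
    have : 2*x/N + -(2/N)*(a^N) * (x / x^N) = (2/N) * (x - a ^ N * (x / x ^ N)) := by ring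
    rw [this]
    have h3 : (0:ℝ) < 2/N := by positivity
    nlinarith
  -- F a = 0
  have hFa : F a = 0 := by
    rw [hF a, Real.rpow_sub ha0, Real.rpow_two, ha2]
    field_simp
    linear_combination 2 * hkey
  -- F positive on (a, ∞)
  have hFpos : ∀ x : ℝ, a < x → 0 < F x := by
    have hmono : StrictMonoOn F (Set.Ici a) := by
      apply strictMonoOn_of_deriv_pos (convex_Ici a)
      · exact fun y hy => ((hF' y (lt_of_lt_of_le ha0 hy)).continuousAt).continuousWithinAt
      · intro y hy
        rw [interior_Ici] at hy
        rw [(hF' y (ha0.trans hy)).deriv]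
        exact hf'pos y hy
    intro x hx
    have := hmono (Set.self_mem_Ici) (Set.mem_Ici.2 hx.le) hx
    rwa [hFa] at this
  have hvpos : ∀ t, 0 < v t := fun t => ha0.trans (hva t)
  have hFv : ∀ t, 0 < F (v t) := fun t => hFpos _ (hva t)
  have hw0 : ∀ t, 0 < Real.sqrt (F (v t)) := fun t => Real.sqrt_pos.2 (hFv t)
  have hderiv_eq : deriv v = fun t => Real.sqrt (F (v t)) := funext fun t => (hvd t).deriv
  have hv2 : ∀ t, HasDerivAt (deriv v)
      ((2*(v t)/N + 2*cs*((2-N)*(v t)^(1-N)))/2) t := by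
    intro t
    have hinner : HasDerivAt (fun s => F (v s))
        ((2*(v t)/N + 2*cs*((2-N)*(v t)^(1-N))) * Real.sqrt (F (v t))) t :=
      (hF' (v t) (hvpos t)).comp t (hvd t)
    have houter := (Real.hasDerivAt_sqrt (hFv t).ne').comp t hinner
    rw [hderiv_eq]
    have heq : 1/(2*Real.sqrt (F (v t))) *
        ((2*(v t)/N + 2*cs*((2-N)*(v t)^(1-N))) * Real.sqrt (F (v t)))
        = (2*(v t)/N + 2*cs*((2-N)*(v t)^(1-N)))/2 := by
      field_simp [(hw0 t).ne']
    rw [← heq]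
    exact houter
  have hdiff2 : ∀ t, DifferentiableAt ℝ (deriv v) t := fun t => (hv2 t).differentiableAt
  refine ⟨hdiff2, ?_⟩
  have hd2eq : ∀ t, deriv (deriv v) t = (2*(v t)/N + 2*cs*((2-N)*(v t)^(1-N)))/2 :=
    fun t => (hv2 t).deriv
  have hHeq : ∀ t, H t = (2*(v t)/N + 2*cs*((2-N)*(v t)^(1-N)))/(2*Real.sqrt (F (v t)))
      + (N-1)*Real.sqrt (F (v t))/(v t) := by
    intro t
    rw [hH t, hd2eq t, hderiv_eq]
    rw [div_div]

  -- monotonicity of v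
  have hvdiff : Differentiable ℝ v := fun t => (hvd t).differentiableAt
  have hmono : Monotone v := by
    apply monotone_of_deriv_nonneg hvdiff
    intro t
    rw [(hvd t).deriv]
    exact Real.sqrt_nonneg _
  have hv1 : ∀ t, 0 ≤ t → 1 ≤ v t := fun t ht => hv0 ▸ hmono ht
  -- a helper: functions with eventually nonneg derivative are monotone there
  have hmonoIci : ∀ (f g : ℝ → ℝ) (T : ℝ), (∀ t, HasDerivAt f (g t) t) →
      (∀ t, T ≤ t → 0 ≤ g t) → MonotoneOn f (Set.Ici T) := by
    intro f g T hf hg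
    apply monotoneOn_of_deriv_nonneg (convex_Ici T)
    · exact fun t _ => (hf t).continuousAt.continuousWithinAt
    · exact fun t _ => (hf t).differentiableAt.differentiableWithinAt
    · intro t ht
      rw [interior_Ici] at ht
      rw [(hf t).deriv]
      exact hg t ht.le
  -- v tends to infinity
  have hvtop : Tendsto v atTop atTop := by
    rcases tendsto_of_monotone hmono with h | ⟨l, hl⟩
    · exact h
    exfalso
    have hle : ∀ t, v t ≤ l := fun t => hmono.ge_of_tendsto hl t
    have hl1 : (1:ℝ) ≤ l := hv0 ▸ hle 0
    have hl0 : (0:ℝ) < l := by linarith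
    obtain ⟨d, hd0, hdle⟩ : ∃ d : ℝ, 0 < d ∧ ∀ t, 0 ≤ t → d ≤ Real.sqrt (F (v t)) := by
      refine ⟨Real.sqrt (2*cs*l^(2-N)), ?_, ?_⟩
      · have := Real.rpow_pos_of_pos hl0 (2-N)
        apply Real.sqrt_pos.2
        positivity
      · intro t ht
        apply Real.sqrt_le_sqrt
        rw [hF]
        have h1 : 1 ≤ v t := hv1 t ht
        have h2 : l^(2-N) ≤ (v t)^(2-N) :=
          Real.rpow_le_rpow_of_nonpos (hvpos t) (hle t) (by linarith)
        have h3 : 0 ≤ ((v t)^2 - 1)/N := by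
          apply div_nonneg _ hN0.le
          nlinarith
        nlinarith
    have hgrow : ∀ t, 0 ≤ t → 1 + d * t ≤ v t := by
      intro t ht
      have hmm := hmonoIci (fun s => v s - d * s) (fun s => Real.sqrt (F (v s)) - d) 0
        (fun s => (hvd s).sub (by simpa using (hasDerivAt_id s).const_mul d))
        (fun s hs => by
          have h4 := hdle s hs
          linarith)
      have h7 := hmm (Set.self_mem_Ici) (Set.mem_Ici.2 ht) ht
      simp only [hv0] at h7
      linarith
    have h8 := hgrow (l/d) (div_nonneg hl0.le hd0.le)
    have h5 := hle (l/d)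
    have h6 : d * (l/d) = l := by field_simp
    rw [h6] at h8
    linarith
  -- limit of F x / x^2
  have hFdiv : Tendsto (fun x => F x / x^2) atTop (𝓝 (1/N)) := by
    have h1 : Tendsto (fun x : ℝ => (1 - (x^2)⁻¹)/N + 2*cs*x^(-N)) atTop
        (𝓝 ((1 - 0)/N + 2*cs*0)) := by
      have ha1' : Tendsto (fun x : ℝ => (x^2)⁻¹) atTop (𝓝 0) :=
        (tendsto_pow_atTop two_ne_zero).inv_tendsto_atTop
      have ha2' : Tendsto (fun x : ℝ => (1 - (x^2)⁻¹)/N) atTop (𝓝 ((1-0)/N)) :=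
        (tendsto_const_nhds.sub ha1').div_const N
      have ha3' : Tendsto (fun x : ℝ => 2*cs*x^(-N)) atTop (𝓝 (2*cs*0)) :=
        (tendsto_rpow_neg_atTop hN0).const_mul _
      exact ha2'.add ha3' 
    norm_num at h1
    rw [one_div]
    apply h1.congr'
    filter_upwards [eventually_ge_atTop (1:ℝ)] with x hx
    have hx0 : (0:ℝ) < x := lt_of_lt_of_le one_pos hx
    rw [hF]
    have h2 : x^(2-N) = x^2 * x^(-N) := by
      rw [show (2:ℝ) - N = 2 + -N by ring, Real.rpow_add hx0, Real.rpow_two]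
    rw [h2]
    field_simp
  have hFnonneg : ∀ x : ℝ, 1 ≤ x → 0 ≤ F x := fun x hx => (hFpos x (lt_of_lt_of_le ha1 hx)).le
  -- limit of sqrt(F x)/x
  have hq : Tendsto (fun x => Real.sqrt (F x) / x) atTop (𝓝 (1/Real.sqrt N)) := by
    have h1 := (Real.continuous_sqrt.tendsto (1/N)).comp hFdiv
    rw [show Real.sqrt (1/N) = 1/Real.sqrt N by
      rw [one_div, one_div, Real.sqrt_inv]] at h1
    apply h1.congr'
    filter_upwards [eventually_ge_atTop (1:ℝ)] with x hx
    have hx0 : 0 < x := lt_of_lt_of_le one_pos hx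
    simp only [Function.comp]
    rw [Real.sqrt_div (hFnonneg x hx), Real.sqrt_sq hx0.le]
  -- x ^ (2 - N) tends to 0
  have hP0 : Tendsto (fun x : ℝ => x^(2-N)) atTop (𝓝 0) := by
    have h := tendsto_rpow_neg_atTop hN2
    apply h.congr
    intro x
    rw [show -(N-2) = 2-N by ring]
  -- main limit for G
  have hGlim : Tendsto (fun x => (Real.sqrt N -
      ((2*x/N + 2*cs*((2-N)*x^(1-N)))/(2*Real.sqrt (F x)) + (N-1)*Real.sqrt (F x)/x)) * x^2)
      atTop (𝓝 ((N-2)/(2*Real.sqrt N))) :=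
    glim_aux N cs a F hN0 hN2 hsN ha1 hcs0 hF hFpos hq hP0
  -- convergence of v t * exp(-t/√N)
  have hC : ∃ C : ℝ, 0 < C ∧ Tendsto (fun t => v t * Real.exp (-(t/Real.sqrt N)))
      atTop (𝓝 C) := by
    set ψ : ℝ → ℝ := fun t => Real.sqrt (F (v t)) / v t - 1/Real.sqrt N with hψ
    have hgd : ∀ t, HasDerivAt (fun s => Real.log (v s) - s/Real.sqrt N) (ψ t) t := by
      intro t
      have h1 : HasDerivAt (fun s => Real.log (v s)) ((v t)⁻¹ * Real.sqrt (F (v t))) t :=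
        (Real.hasDerivAt_log (hvpos t).ne').comp t (hvd t)
      have h2 : HasDerivAt (fun s : ℝ => s/Real.sqrt N) (1/Real.sqrt N) t := by
        simpa using (hasDerivAt_id t).div_const (Real.sqrt N)
      have h3 := h1.sub h2
      refine h3.congr_deriv ?_
      rw [hψ]
      simp only
      rw [inv_mul_eq_div]
    have hψc : Continuous ψ := by
      rw [continuous_iff_continuousAt]
      intro t
      have hvc : ContinuousAt v t := (hvd t).continuousAt
      have h1 : ContinuousAt (fun x : ℝ => x ^ (2-N)) (v t) :=
        Real.continuousAt_rpow_const _ _ (Or.inl (hvpos t).ne')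
      have hFc : ContinuousAt (fun s => F (v s)) t := by
        have h2 : ContinuousAt (fun s => ((v s) ^ 2 - 1)/N + 2*cs*(v s)^(2-N)) t :=
          (((hvc.pow 2).sub continuousAt_const).div_const N).add
            (continuousAt_const.mul (h1.comp hvc))
        have hFe : (fun s => F (v s)) = fun s => ((v s) ^ 2 - 1)/N + 2*cs*(v s)^(2-N) :=
          funext fun s => hF (v s)
        rw [hFe]
        exact h2
      exact ((Real.continuous_sqrt.continuousAt.comp hFc).div hvc (hvpos t).ne').sub
        continuousAt_const
    obtain ⟨T₀, hT₀⟩ := eventually_atTop.1 (hvtop.eventually_ge_atTop 2)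
    have h2N : (0:ℝ) < Real.sqrt (2*N) := Real.sqrt_pos.2 (by linarith)
    set δ : ℝ := 1/Real.sqrt (2*N) with hδ
    have hδ0 : 0 < δ := by positivity
    have hlow : ∀ x : ℝ, 2 ≤ x → x * δ ≤ Real.sqrt (F x) := by
      intro x hx2
      have hx0 : (0:ℝ) < x := by linarith
      have h1 : x^2/(2*N) ≤ F x := by
        rw [hF]
        have hrp : 0 < x^(2-N) := Real.rpow_pos_of_pos hx0 _
        have he : (x^2-1)/N - x^2/(2*N) = (x^2-2)/(2*N) := by field_simp; ring
        have h4 : 0 ≤ (x^2-2)/(2*N) := by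
          apply div_nonneg _ (by linarith)
          nlinarith
        nlinarith [mul_pos (mul_pos two_pos hcs0) hrp]
      calc x * δ = Real.sqrt (x^2/(2*N)) := by
            rw [Real.sqrt_div (sq_nonneg x), Real.sqrt_sq hx0.le, hδ]
            ring
        _ ≤ Real.sqrt (F x) := Real.sqrt_le_sqrt h1
    have hgrow : ∀ t, T₀ ≤ t → Real.exp (δ*(t-T₀)) ≤ v t := by
      intro t ht
      have hm2 := hmonoIci (fun s => Real.log (v s) - δ*s)
        (fun s => Real.sqrt (F (v s)) / v s - δ) T₀
        (fun s => by
          have h1 : HasDerivAt (fun u => Real.log (v u)) ((v s)⁻¹ * Real.sqrt (F (v s))) s :=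
            (Real.hasDerivAt_log (hvpos s).ne').comp s (hvd s)
          have h2 := h1.sub (by simpa using (hasDerivAt_id s).const_mul δ :
            HasDerivAt (fun u : ℝ => δ*u) δ s)
          refine h2.congr_deriv ?_
          rw [inv_mul_eq_div])
        (fun s hs => by
          have h3 := hlow (v s) (hT₀ s hs)
          have h4 := hvpos s
          rw [sub_nonneg, le_div_iff₀ h4]
          linarith)
      have h5 := hm2 (Set.self_mem_Ici) (Set.mem_Ici.2 ht) ht
      simp only at h5
      have h6 : (0:ℝ) ≤ Real.log (v T₀) := Real.log_nonneg (by linarith [hT₀ T₀ le_rfl])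
      have h7 : δ*(t-T₀) ≤ Real.log (v t) := by linarith
      calc Real.exp (δ*(t-T₀)) ≤ Real.exp (Real.log (v t)) := Real.exp_le_exp.2 h7
        _ = v t := Real.exp_log (hvpos t)
    set K : ℝ := Real.sqrt N * (1/N + 2*cs) with hK
    have hb : ∀ t, T₀ ≤ t → |ψ t| ≤ K * Real.exp (-(2*δ)*(t-T₀)) := by
      intro t ht
      have hx2 : 2 ≤ v t := hT₀ t ht
      have hx1 : 1 ≤ v t := by linarith
      have hx0 : 0 < v t := hvpos t
      have e1 : Real.sqrt (F (v t)) / v t = Real.sqrt (F (v t) / (v t)^2) := by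
        rw [Real.sqrt_div (hFv t).le, Real.sqrt_sq hx0.le]
      have e2 : (1:ℝ)/Real.sqrt N = Real.sqrt (1/N) := by
        rw [one_div, one_div, Real.sqrt_inv]
      have h4 := sqrt_diff_le (A := F (v t)/(v t)^2) (B := 1/N)
        (div_nonneg (hFv t).le (sq_nonneg _)) (by positivity)
      have h5 : |F (v t)/(v t)^2 - 1/N| ≤ (1/N + 2*cs)/(v t)^2 := by
        have hr1 : (v t)^(2-N) ≤ 1 :=
          Real.rpow_le_one_of_one_le_of_nonpos hx1 (by linarith)
        have hr0 : 0 < (v t)^(2-N) := Real.rpow_pos_of_pos hx0 _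
        have he : F (v t)/(v t)^2 - 1/N = (-(1/N) + 2*cs*(v t)^(2-N))/(v t)^2 := by
          rw [hF]
          field_simp
          ring
        rw [he, abs_div, abs_of_nonneg (by positivity : (0:ℝ) ≤ (v t)^2)]
        gcongr
        · rw [abs_le]
          have hcy : cs * (v t)^(2-N) ≤ cs := by
            nlinarith [mul_le_mul_of_nonneg_left hr1 hcs0.le]
          have h1N : (0:ℝ) < 1/N := by positivity
          constructor
          · nlinarith
          · nlinarith
      have hK0 : (0:ℝ) ≤ K := by rw [hK]; positivity
      have hE0 : (0:ℝ) < Real.exp (δ*(t-T₀)) := Real.exp_pos _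
      have hE := hgrow t ht
      have hEE : Real.exp (-(2*δ)*(t-T₀))
          = (Real.exp (δ*(t-T₀)) * Real.exp (δ*(t-T₀)))⁻¹ := by
        rw [← Real.exp_add, ← Real.exp_neg]
        ring_nf
      calc |ψ t| = |Real.sqrt (F (v t) / (v t)^2) - Real.sqrt (1/N)| := by
            rw [hψ]
            simp only
            rw [e1, e2]
        _ ≤ |F (v t)/(v t)^2 - 1/N| / Real.sqrt (1/N) := h4
        _ = |F (v t)/(v t)^2 - 1/N| * Real.sqrt N := by
            rw [← e2]
            field_simp
        _ ≤ ((1/N + 2*cs)/(v t)^2) * Real.sqrt N :=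
            mul_le_mul_of_nonneg_right h5 (Real.sqrt_nonneg N)
        _ = K * ((v t)^2)⁻¹ := by rw [hK]; ring
        _ ≤ K * Real.exp (-(2*δ)*(t-T₀)) := by
            apply mul_le_mul_of_nonneg_left ?_ hK0
            rw [hEE]
            apply inv_anti₀ (by positivity)
            nlinarith
    have hint : MeasureTheory.IntegrableOn ψ (Set.Ioi T₀) := by
      have hg : MeasureTheory.IntegrableOn
          (fun t => (K * Real.exp (2*δ*T₀)) * Real.exp (-(2*δ)*t)) (Set.Ioi T₀) :=
        (exp_neg_integrableOn_Ioi T₀ (by positivity)).const_mul _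
      apply hg.integrable.mono' (hψc.aestronglyMeasurable)
      rw [MeasureTheory.ae_restrict_iff' measurableSet_Ioi]
      apply MeasureTheory.ae_of_all
      intro t ht
      rw [Real.norm_eq_abs]
      calc |ψ t| ≤ K * Real.exp (-(2*δ)*(t-T₀)) := hb t (le_of_lt ht)
        _ = (K * Real.exp (2*δ*T₀)) * Real.exp (-(2*δ)*t) := by
            have h9 : Real.exp (-(2*δ)*(t-T₀)) = Real.exp (2*δ*T₀) * Real.exp (-(2*δ)*t) := by
              rw [← Real.exp_add]
              ring_nf
            rw [h9]
            ring
    have hFTC : ∀ t, T₀ ≤ t → Real.log (v t) - t/Real.sqrt N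
        = (Real.log (v T₀) - T₀/Real.sqrt N) + ∫ s in T₀..t, ψ s := by
      intro t ht
      have h1 := intervalIntegral.integral_eq_sub_of_hasDerivAt
        (f := fun s => Real.log (v s) - s/Real.sqrt N) (f' := ψ)
        (fun s _ => hgd s) (hψc.intervalIntegrable T₀ t)
      linarith [h1]
    have hIlim : Tendsto (fun t => ∫ s in T₀..t, ψ s) atTop
        (𝓝 (∫ s in Set.Ioi T₀, ψ s)) :=
      MeasureTheory.intervalIntegral_tendsto_integral_Ioi T₀ hint tendsto_id
    have hglim : Tendsto (fun t => Real.log (v t) - t/Real.sqrt N) atTop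
        (𝓝 ((Real.log (v T₀) - T₀/Real.sqrt N) + ∫ s in Set.Ioi T₀, ψ s)) := by
      apply (tendsto_const_nhds.add hIlim).congr'
      filter_upwards [eventually_ge_atTop T₀] with t ht
      exact (hFTC t ht).symm
    refine ⟨Real.exp ((Real.log (v T₀) - T₀/Real.sqrt N) + ∫ s in Set.Ioi T₀, ψ s),
      Real.exp_pos _, ?_⟩
    have hexp := (Real.continuous_exp.tendsto _).comp hglim
    apply hexp.congr
    intro t
    simp only [Function.comp]
    rw [Real.exp_sub, Real.exp_log (hvpos t), Real.exp_neg]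
    ring
  -- assembly
  obtain ⟨C, hC0, hCt⟩ := hC
  refine ⟨(N-2)/(2*Real.sqrt N) * (C⁻¹)^2, ?_, ?_⟩
  · exact mul_pos (div_pos hN2 (by positivity)) (pow_pos (inv_pos.2 hC0) 2)
  · have h1 := hGlim.comp hvtop
    have h2 : Tendsto (fun t => ((v t * Real.exp (-(t/Real.sqrt N)))⁻¹)^2) atTop
        (𝓝 ((C⁻¹)^2)) := (hCt.inv₀ hC0.ne').pow 2
    apply (h1.mul h2).congr
    intro t
    simp only [Function.comp]
    rw [← hHeq t]
    have hvt : v t ≠ 0 := (hvpos t).ne'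
    have hexp : ((Real.exp (-(t/Real.sqrt N)))⁻¹)^2 = Real.exp (2*t/Real.sqrt N) := by
      rw [← Real.exp_neg, neg_neg, ← Real.exp_nat_mul]
      norm_num
      rw [mul_div_assoc]
    rw [mul_inv, mul_pow, hexp]
    field_simp
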